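/- Let ρ, ρ' ∈ (0,1) with ρ' < √ρ. Then for every f : ℕ → ℝ with |f(x+1) − f(x)| ≤ ρ^{−x/2} for all x ∈ ℕ (such f is integrable with respect to both G(ρ) and G(ρ')), |Σ_k f(k) G(ρ)(k) − Σ_k f(k) G(ρ')(k)| ≤ |ρ − ρ'| · (1−ρ') / ((1−√ρ)² (√ρ − ρ')). -/

import Mathlib

open Finset

/-- Growth bound on `f` from the Lipschitz-type condition. -/
private lemma f_growth {S : ℝ} (hS0 : 0 < S) (hS1 : S < 1) {f : ℕ → ℝ}
    (hf : ∀ x : ℕ, |f (x + 1) - f x| ≤ S⁻¹ ^ x) :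
    ∀ k : ℕ, |f k| ≤ |f 0| + k * S⁻¹ ^ k := by
  have hu1 : (1:ℝ) ≤ S⁻¹ := (one_le_inv_iff₀).2 ⟨hS0, hS1.le⟩
  intro k
  induction k with
  | zero => simp
  | succ n ih =>
    have h1 : |f (n+1)| ≤ |f n| + S⁻¹ ^ n := by
      have := hf n
      have habs : |f (n+1)| - |f n| ≤ |f (n+1) - f n| := by
        have := abs_sub_abs_le_abs_sub (f (n+1)) (f n)
        linarith
      linarith
    have hpow : S⁻¹ ^ n ≤ S⁻¹ ^ (n+1) := pow_le_pow_right₀ hu1 (Nat.le_succ n)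
    have hn0 : (0:ℕ) ≤ n := Nat.zero_le n
    have : |f 0| + n * S⁻¹ ^ n + S⁻¹ ^ n ≤ |f 0| + (n+1 : ℕ) * S⁻¹ ^ (n+1) := by
      push_cast
      have hpn : (0:ℝ) ≤ (n:ℝ) := Nat.cast_nonneg n
      nlinarith
    linarith

/-- Summability of `f k * r ^ k`. -/
private lemma summable_f_pow {S r : ℝ} (hS0 : 0 < S) (hS1 : S < 1) (hr0 : 0 ≤ r)
    (hrS : r < S) {f : ℕ → ℝ} (hf : ∀ x : ℕ, |f (x + 1) - f x| ≤ S⁻¹ ^ x) :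
    Summable (fun k : ℕ => f k * r ^ k) := by
  have hgrow := f_growth hS0 hS1 hf
  have hrS1 : r / S < 1 := (div_lt_one hS0).2 hrS
  have hrS0 : 0 ≤ r / S := div_nonneg hr0 hS0.le
  have hb1 : Summable (fun k : ℕ => |f 0| * r ^ k) :=
    (summable_geometric_of_lt_one hr0 (hrS.trans hS1)).mul_left _
  have hb2 : Summable (fun k : ℕ => (k:ℝ) * (r/S) ^ k) := by
    have := summable_pow_mul_geometric_of_norm_lt_one (R := ℝ) 1
      (r := r/S) (by rw [Real.norm_eq_abs, abs_of_nonneg hrS0]; exact hrS1)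
    simpa using this
  refine Summable.of_norm_bounded (hb1.add hb2) ?_
  intro k
  have hkey : (r/S) ^ k = S⁻¹ ^ k * r ^ k := by
    rw [div_pow, inv_pow, div_eq_inv_mul]
  have hrk : (0:ℝ) ≤ r ^ k := pow_nonneg hr0 k
  calc ‖f k * r ^ k‖ = |f k| * r ^ k := by
        rw [Real.norm_eq_abs, abs_mul, abs_of_nonneg hrk]
    _ ≤ (|f 0| + k * S⁻¹ ^ k) * r ^ k := by
        exact mul_le_mul_of_nonneg_right (hgrow k) hrk
    _ = |f 0| * r ^ k + (k:ℝ) * (r/S) ^ k := by rw [hkey]; ring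

/-- Summability of the increments series. -/
private lemma summable_d_pow {S r : ℝ} (hS0 : 0 < S) (hr0 : 0 ≤ r)
    (hrS : r < S) {f : ℕ → ℝ} (hf : ∀ x : ℕ, |f (x + 1) - f x| ≤ S⁻¹ ^ x) :
    Summable (fun k : ℕ => (f (k+1) - f k) * r ^ (k+1)) := by
  have hrS1 : r / S < 1 := (div_lt_one hS0).2 hrS
  have hrS0 : 0 ≤ r / S := div_nonneg hr0 hS0.le
  refine Summable.of_norm_bounded
    ((summable_geometric_of_lt_one hrS0 hrS1).mul_left r) ?_
  intro k
  have hrk : (0:ℝ) ≤ r ^ (k+1) := pow_nonneg hr0 _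
  calc ‖(f (k+1) - f k) * r ^ (k+1)‖ = |f (k+1) - f k| * r ^ (k+1) := by
        rw [Real.norm_eq_abs, abs_mul, abs_of_nonneg hrk]
    _ ≤ S⁻¹ ^ k * r ^ (k+1) := mul_le_mul_of_nonneg_right (hf k) hrk
    _ = r * (r/S) ^ k := by
        rw [div_pow, inv_pow, pow_succ]
        field_simp

/-- Abel-summation identity for the geometric expectation. -/
private lemma geom_tsum_identity {S r : ℝ} (hS0 : 0 < S) (hS1 : S < 1) (hr0 : 0 ≤ r)
    (hrS : r < S) {f : ℕ → ℝ} (hf : ∀ x : ℕ, |f (x + 1) - f x| ≤ S⁻¹ ^ x) :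
    (∑' k : ℕ, f k * ((1 - r) * r ^ k)) =
      f 0 + ∑' k : ℕ, (f (k+1) - f k) * r ^ (k+1) := by
  have hg : Summable (fun k : ℕ => f k * r ^ k) := summable_f_pow hS0 hS1 hr0 hrS hf
  have hg1 : Summable (fun k : ℕ => f (k+1) * r ^ (k+1)) :=
    (summable_nat_add_iff 1).2 hg
  have hd : Summable (fun k : ℕ => (f (k+1) - f k) * r ^ (k+1)) :=
    summable_d_pow hS0 hr0 hrS hf
  have hsplit : ∀ k : ℕ, f k * ((1 - r) * r ^ k) =
      (f k * r ^ k - f (k+1) * r ^ (k+1)) + (f (k+1) - f k) * r ^ (k+1) := by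
    intro k; rw [pow_succ]; ring
  calc (∑' k : ℕ, f k * ((1 - r) * r ^ k))
      = ∑' k : ℕ, ((f k * r ^ k - f (k+1) * r ^ (k+1)) + (f (k+1) - f k) * r ^ (k+1)) := by
        exact tsum_congr hsplit
    _ = (∑' k : ℕ, (f k * r ^ k - f (k+1) * r ^ (k+1)))
        + ∑' k : ℕ, (f (k+1) - f k) * r ^ (k+1) := Summable.tsum_add (hg.sub hg1) hd
    _ = f 0 + ∑' k : ℕ, (f (k+1) - f k) * r ^ (k+1) := by
        congr 1
        rw [Summable.tsum_sub hg hg1, Summable.tsum_eq_zero_add hg]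
        simp

theorem geometric_closeness (ρ ρ' : ℝ) (h1 : 0 < ρ) (h2 : ρ < 1)
    (h3 : 0 < ρ') (h4 : ρ' < Real.sqrt ρ)
    (f : ℕ → ℝ) (hf : ∀ x : ℕ, |f (x + 1) - f x| ≤ (Real.sqrt ρ)⁻¹ ^ x) :
    |(∑' k : ℕ, f k * ((1 - ρ) * ρ ^ k)) - ∑' k : ℕ, f k * ((1 - ρ') * ρ' ^ k)| ≤
      |ρ - ρ'| * (1 - ρ') / ((1 - Real.sqrt ρ) ^ 2 * (Real.sqrt ρ - ρ')) := by
  set S := Real.sqrt ρ with hSdef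
  have hS0 : 0 < S := Real.sqrt_pos.2 h1
  have hSS : S * S = ρ := Real.mul_self_sqrt h1.le
  have hS1 : S < 1 := by nlinarith
  have hρS : ρ < S := by nlinarith
  have ht1 : ρ' / S < 1 := (div_lt_one hS0).2 h4
  have ht0 : 0 ≤ ρ' / S := div_nonneg h3.le hS0.le
  -- rewrite both tsums via the Abel identity
  rw [geom_tsum_identity hS0 hS1 h1.le hρS hf,
      geom_tsum_identity hS0 hS1 h3.le h4 hf]
  have hd : Summable (fun k : ℕ => (f (k+1) - f k) * ρ ^ (k+1)) :=
    summable_d_pow hS0 h1.le hρS hf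
  have hd' : Summable (fun k : ℕ => (f (k+1) - f k) * ρ' ^ (k+1)) :=
    summable_d_pow hS0 h3.le h4 hf
  have hdiff : (f 0 + ∑' k : ℕ, (f (k+1) - f k) * ρ ^ (k+1))
      - (f 0 + ∑' k : ℕ, (f (k+1) - f k) * ρ' ^ (k+1))
      = ∑' k : ℕ, ((f (k+1) - f k) * ρ ^ (k+1) - (f (k+1) - f k) * ρ' ^ (k+1)) := by
    rw [Summable.tsum_sub hd hd']; ring
  rw [hdiff]
  -- Cauchy product bound series
  have hSgeom : Summable (fun k : ℕ => ‖S ^ k‖) := by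
    simpa [Real.norm_eq_abs, abs_of_nonneg (pow_nonneg hS0.le _)] using
      summable_geometric_of_lt_one hS0.le hS1
  have htgeom : Summable (fun k : ℕ => ‖(ρ'/S) ^ k‖) := by
    simpa [Real.norm_eq_abs, abs_of_nonneg (pow_nonneg ht0 _)] using
      summable_geometric_of_lt_one ht0 ht1
  have hb : Summable (fun n : ℕ => ∑ k ∈ range (n+1), S ^ k * (ρ'/S) ^ (n-k)) :=
    (summable_norm_sum_mul_range_of_summable_norm hSgeom htgeom).of_norm
  have hbsum : (∑' n : ℕ, ∑ k ∈ range (n+1), S ^ k * (ρ'/S) ^ (n-k))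
      = (1 - S)⁻¹ * (1 - ρ'/S)⁻¹ := by
    rw [← tsum_mul_tsum_eq_tsum_sum_range_of_summable_norm hSgeom htgeom,
        tsum_geometric_of_lt_one hS0.le hS1, tsum_geometric_of_lt_one ht0 ht1]
  -- pointwise bound
  have hterm : ∀ k : ℕ, |(f (k+1) - f k) * ρ ^ (k+1) - (f (k+1) - f k) * ρ' ^ (k+1)|
      ≤ |ρ - ρ'| * ∑ i ∈ range (k+1), S ^ i * (ρ'/S) ^ (k-i) := by
    intro k
    have hgs : (∑ i ∈ range (k+1), ρ ^ i * ρ' ^ (k - i)) * (ρ - ρ') =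
        ρ ^ (k+1) - ρ' ^ (k+1) := by
      have := geom_sum₂_mul ρ ρ' (k+1)
      simpa using this
    have hsum_eq : ∀ i ∈ range (k+1),
        S⁻¹ ^ k * (ρ ^ i * ρ' ^ (k - i)) = S ^ i * (ρ'/S) ^ (k-i) := by
      intro i hi
      have hik : i ≤ k := Nat.lt_succ_iff.1 (mem_range.1 hi)
      obtain ⟨j, hj⟩ := Nat.exists_eq_add_of_le hik
      subst hj
      simp only [Nat.add_sub_cancel_left]
      rw [← hSS, inv_pow, div_pow, mul_pow, pow_add]
      have h1' : S ^ i ≠ 0 := pow_ne_zero _ hS0.ne'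
      have h2' : S ^ j ≠ 0 := pow_ne_zero _ hS0.ne'
      field_simp
    calc |(f (k+1) - f k) * ρ ^ (k+1) - (f (k+1) - f k) * ρ' ^ (k+1)|
        = |f (k+1) - f k| * |ρ ^ (k+1) - ρ' ^ (k+1)| := by
          rw [← mul_sub, abs_mul]
      _ ≤ S⁻¹ ^ k * |ρ ^ (k+1) - ρ' ^ (k+1)| :=
          mul_le_mul_of_nonneg_right (hf k) (abs_nonneg _)
      _ = S⁻¹ ^ k * (|∑ i ∈ range (k+1), ρ ^ i * ρ' ^ (k - i)| * |ρ - ρ'|) := by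
          rw [← hgs, abs_mul]
      _ ≤ S⁻¹ ^ k * ((∑ i ∈ range (k+1), ρ ^ i * ρ' ^ (k - i)) * |ρ - ρ'|) := by
          refine mul_le_mul_of_nonneg_left ?_ (pow_nonneg (inv_nonneg.2 hS0.le) k)
          refine mul_le_mul_of_nonneg_right (le_of_eq ?_) (abs_nonneg _)
          refine abs_of_nonneg ?_
          exact Finset.sum_nonneg fun i _ =>
            mul_nonneg (pow_nonneg h1.le _) (pow_nonneg h3.le _)
      _ = |ρ - ρ'| * ∑ i ∈ range (k+1), S ^ i * (ρ'/S) ^ (k-i) := by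
          rw [← Finset.sum_congr rfl hsum_eq, ← Finset.mul_sum]
          ring
  -- assemble
  have hsummable : Summable (fun k : ℕ =>
      (f (k+1) - f k) * ρ ^ (k+1) - (f (k+1) - f k) * ρ' ^ (k+1)) := hd.sub hd'
  have habs_le : |∑' k : ℕ, ((f (k+1) - f k) * ρ ^ (k+1) - (f (k+1) - f k) * ρ' ^ (k+1))|
      ≤ ∑' k : ℕ, |ρ - ρ'| * ∑ i ∈ range (k+1), S ^ i * (ρ'/S) ^ (k-i) := by
    refine le_trans ?_ (Summable.tsum_le_tsum hterm ?_ (hb.mul_left _))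
    · have := norm_tsum_le_tsum_norm (f := fun k : ℕ =>
        (f (k+1) - f k) * ρ ^ (k+1) - (f (k+1) - f k) * ρ' ^ (k+1)) ?_
      · simpa [Real.norm_eq_abs] using this
      · refine hsummable.abs
    · exact hsummable.abs
  refine habs_le.trans ?_
  rw [tsum_mul_left, hbsum]
  -- final algebraic inequality
  have h1S : 0 < 1 - S := by linarith
  have hSρ' : 0 < S - ρ' := by linarith
  have h1t : 0 < 1 - ρ'/S := by linarith
  have habs : 0 ≤ |ρ - ρ'| := abs_nonneg _
  have hfact : S * (1 - S) ≤ 1 - ρ' := by nlinarith [sq_nonneg (1 - S)]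
  have hkey : (1 - S)⁻¹ * (1 - ρ'/S)⁻¹ ≤ (1 - ρ') / ((1 - S) ^ 2 * (S - ρ')) := by
    have hL : (1 - S)⁻¹ * (1 - ρ'/S)⁻¹ = S / ((1 - S) * (S - ρ')) := by
      rw [eq_div_iff (by positivity)]
      field_simp
    rw [hL, div_le_div_iff₀ (by positivity) (by positivity)]
    nlinarith [mul_le_mul_of_nonneg_right hfact (mul_pos h1S hSρ').le]
  calc |ρ - ρ'| * ((1 - S)⁻¹ * (1 - ρ'/S)⁻¹)
      ≤ |ρ - ρ'| * ((1 - ρ') / ((1 - S) ^ 2 * (S - ρ'))) :=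
        mul_le_mul_of_nonneg_left hkey habs
    _ = |ρ - ρ'| * (1 - ρ') / ((1 - S) ^ 2 * (S - ρ')) := by ring
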